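/- The concatenation Γ ∗ Γ′ of a λ-chain Γ and a λ′-chain Γ′ is a (λ+λ′)-chain. In particular, for each index ι′ in the second segment and each positive root α, N^{Γ∗Γ′}_{ι′}(α) = ⟨λ, α^∨⟩ + N^{Γ′}_{ι′}(α), and the interchange condition N^{Γ∗Γ′}_ι(γ) = N^{Γ∗Γ′}_ι(α) + p·N^{Γ∗Γ′}_ι(β) holds whenever γ^∨ = α^∨ + p·β^∨ and β is the root at position ι. -/

import Mathlib

/-- `Ncount Γ k δ` = `N^Γ_k(δ)`, the number of occurrences of the root `δ`
among the first `k` entries of the chain `Γ` (i.e. before position `k`). -/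
def Ncount {R : Type} [DecidableEq R] (Γ : List R) (k : ℕ) (δ : R) : ℕ :=
  (Γ.take k).count δ

/-- `Γ` is a `λ`-chain for the weight functional `lam` on the coroot lattice `Q`:
every root `α` occurs exactly `⟨λ, α^∨⟩` times, and whenever
`γ^∨ = α^∨ + p β^∨` with `α ≠ β`, the interchange condition
`N^Γ_k(γ) = N^Γ_k(α) + p N^Γ_k(β)` holds at every position `k` carrying `β`. -/
def IsLamChain {R Q : Type} [DecidableEq R] [AddCommGroup Q]
    (coroot : R → Q) (lam : Q →+ ℤ) (Γ : List R) : Prop :=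
  (∀ α : R, (Γ.count α : ℤ) = lam (coroot α)) ∧
  (∀ (α β γ : R) (p : ℤ), α ≠ β → coroot γ = coroot α + p • coroot β →
    ∀ k : ℕ, Γ[k]? = some β →
      (Ncount Γ k γ : ℤ) = (Ncount Γ k α : ℤ) + p * (Ncount Γ k β : ℤ))

lemma Ncount_append_left {R : Type} [DecidableEq R] (Γ Γ' : List R) (k : ℕ)
    (hk : k ≤ Γ.length) (α : R) : Ncount (Γ ++ Γ') k α = Ncount Γ k α := by
  simp [Ncount, List.take_append_of_le_length hk]

lemma Ncount_append_right {R : Type} [DecidableEq R] (Γ Γ' : List R) (k : ℕ) (α : R) :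
    Ncount (Γ ++ Γ') (Γ.length + k) α = Γ.count α + Ncount Γ' k α := by
  simp [Ncount, List.take_append, List.count_append, List.take_of_length_le (Nat.le_add_right Γ.length k)]

/-- the concatenation `Γ ∗ Γ′` of a `λ`-chain and a `λ′`-chain is a
`(λ+λ′)`-chain; in particular, for indices in the second segment,
`N^{Γ∗Γ′}_{ι′}(α) = ⟨λ, α^∨⟩ + N^{Γ′}_{ι′}(α)`, and the interchange condition
holds at every position of `Γ ∗ Γ′` carrying `β`. -/
theorem stmt4 {R Q : Type} [DecidableEq R] [AddCommGroup Q]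
    (coroot : R → Q) (lam lam' : Q →+ ℤ) (Γ Γ' : List R)
    (hΓ : IsLamChain coroot lam Γ) (hΓ' : IsLamChain coroot lam' Γ') :
    IsLamChain coroot (lam + lam') (Γ ++ Γ') ∧
    (∀ (k : ℕ) (α : R), k ≤ Γ'.length →
      (Ncount (Γ ++ Γ') (Γ.length + k) α : ℤ) = lam (coroot α) + (Ncount Γ' k α : ℤ)) ∧
    (∀ (α β γ : R) (p : ℤ) (k : ℕ), α ≠ β → coroot γ = coroot α + p • coroot β →
      (Γ ++ Γ')[k]? = some β →
      (Ncount (Γ ++ Γ') k γ : ℤ)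
        = (Ncount (Γ ++ Γ') k α : ℤ) + p * (Ncount (Γ ++ Γ') k β : ℤ)) := by
  obtain ⟨h1, h2⟩ := hΓ
  obtain ⟨h1', h2'⟩ := hΓ'
  have hsecond : ∀ (k : ℕ) (α : R),
      (Ncount (Γ ++ Γ') (Γ.length + k) α : ℤ) = lam (coroot α) + (Ncount Γ' k α : ℤ) := by
    intro k α
    rw [Ncount_append_right]
    push_cast
    rw [h1 α]
  have hinter : ∀ (α β γ : R) (p : ℤ) (k : ℕ), α ≠ β → coroot γ = coroot α + p • coroot β →
      (Γ ++ Γ')[k]? = some β →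
      (Ncount (Γ ++ Γ') k γ : ℤ)
        = (Ncount (Γ ++ Γ') k α : ℤ) + p * (Ncount (Γ ++ Γ') k β : ℤ) := by
    intro α β γ p k hne hcor hk
    rcases lt_or_ge k Γ.length with h | h
    · rw [Ncount_append_left _ _ _ h.le, Ncount_append_left _ _ _ h.le,
        Ncount_append_left _ _ _ h.le]
      refine h2 α β γ p hne hcor k ?_
      rw [List.getElem?_append, if_pos h] at hk; exact hk
    · obtain ⟨j, rfl⟩ := Nat.exists_eq_add_of_le h
      rw [hsecond, hsecond, hsecond]
      have hj : Γ'[j]? = some β := by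
        rw [List.getElem?_append, if_neg (by omega), Nat.add_sub_cancel_left] at hk; exact hk
      have hg := h2' α β γ p hne hcor j hj
      have hlam : lam (coroot γ) = lam (coroot α) + p * lam (coroot β) := by
        rw [hcor]; simp [smul_eq_mul]
      rw [hg, hlam]; ring
  refine ⟨⟨?_, fun α β γ p hne hc k => hinter α β γ p k hne hc⟩, fun k α _ => hsecond k α, hinter⟩
  intro α
  simp only [List.count_append, AddMonoidHom.add_apply]
  push_cast
  rw [h1 α, h1' α]
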